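/- arXiv:1905.05608 — 4 statements merged into one kernel-verified Lean document; each statement's English description precedes it below -/
import Mathlib

section
/- Let α ∈ [0,1], N ≥ 1, h > 0, and define the discrete fractional derivatives Δ_-^α z_k := h^{-α} ∑_{n=0}^k α_n z_{k-n} and Δ_+^α z_k := h^{-α} ∑_{n=0}^{N-k} α_n z_{k+n}, where α_n are the Grünwald–Letnikov coefficients. If (F_k)_{0:N} and (G_k)_{0:N} are real sequences with F_0 = F_N = G_0 = G_N = 0, then ∑_{k=0}^{N-1} (Δ_+^α G_k) F_k = ∑_{k=1}^{N} G_k (Δ_-^α F_k). -/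
open Finset

/-- Grünwald–Letnikov coefficients: `α_n = (-1)^n * binom(α, n)`,
i.e. `α_0 = 1`, `α_n = -α(1-α)(2-α)⋯(n-1-α)/n!` for `n ≥ 1`. -/
noncomputable def glCoef (α : ℝ) (n : ℕ) : ℝ :=
  (-1 : ℝ) ^ n * (∏ i ∈ Finset.range n, (α - (i : ℝ))) / (n.factorial : ℝ)

/-- Retarded discrete fractional derivative `Δ_-^α z_k`. -/
noncomputable def dfracMinus (α h : ℝ) (z : ℕ → ℝ) (k : ℕ) : ℝ :=
  h ^ (-α) * ∑ n ∈ Finset.range (k + 1), glCoef α n * z (k - n)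

/-- Advanced discrete fractional derivative `Δ_+^α z_k` (with horizon `N`). -/
noncomputable def dfracPlus (α h : ℝ) (N : ℕ) (z : ℕ → ℝ) (k : ℕ) : ℝ :=
  h ^ (-α) * ∑ n ∈ Finset.range (N - k + 1), glCoef α n * z (k + n)

/-- Composed retarded operator `Δ_-^α Δ_-^α z_k`. -/
noncomputable def ddfracMinus (α h : ℝ) (z : ℕ → ℝ) (k : ℕ) : ℝ :=
  h ^ (-(2 * α)) * ∑ n ∈ Finset.range (k + 1), glCoef α n *
    ∑ p ∈ Finset.range (k - n + 1), glCoef α p * z (k - n - p)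

/-- Composed advanced operator `Δ_+^α Δ_+^α z_k`. -/
noncomputable def ddfracPlus (α h : ℝ) (N : ℕ) (z : ℕ → ℝ) (k : ℕ) : ℝ :=
  h ^ (-(2 * α)) * ∑ n ∈ Finset.range (N - k + 1), glCoef α n *
    ∑ p ∈ Finset.range (N - k - n + 1), glCoef α p * z (k + n + p)

/-- discrete asymmetric integration by parts:
`∑_{k=0}^{N-1} (Δ_+^α G_k) F_k = ∑_{k=1}^{N} G_k (Δ_-^α F_k)`. -/
theorem discrete_fractional_integration_by_parts
    (α h : ℝ) (hα0 : 0 ≤ α) (hα1 : α ≤ 1) (hh : 0 < h)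
    (N : ℕ) (hN : 1 ≤ N) (F G : ℕ → ℝ)
    (hF0 : F 0 = 0) (hFN : F N = 0) (hG0 : G 0 = 0) (hGN : G N = 0) :
    ∑ k ∈ Finset.range N, dfracPlus α h N G k * F k
      = ∑ k ∈ Finset.Icc 1 N, G k * dfracMinus α h F k := by
  have key : ∀ (j : ℕ), ∑ n ∈ Finset.range (j+1), glCoef α n * F (j - n)
      = ∑ k ∈ Finset.range (j+1), glCoef α (j-k) * F k := by
    intro j
    rw [← Finset.sum_range_reflect]
    refine Finset.sum_congr rfl fun i hi => ?_
    simp only [Finset.mem_range] at hi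
    have h1 : j + 1 - 1 - i = j - i := by omega
    have h2 : j - (j - i) = i := by omega
    rw [h1, h2]
  calc ∑ k ∈ Finset.range N, dfracPlus α h N G k * F k
      = ∑ k ∈ Finset.range (N+1), ∑ j ∈ Finset.Ico k (N+1),
          h ^ (-α) * (glCoef α (j-k) * G j * F k) := by
        rw [Finset.sum_range_succ]
        have h0 : ∑ j ∈ Finset.Ico N (N+1), h ^ (-α) * (glCoef α (j-N) * G j * F N) = 0 := by
          simp [hFN]
        rw [h0, add_zero]
        refine Finset.sum_congr rfl fun k hk => ?_
        simp only [Finset.mem_range] at hk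
        rw [Finset.sum_Ico_eq_sum_range]
        have e : N + 1 - k = N - k + 1 := by omega
        rw [e, dfracPlus, Finset.mul_sum, Finset.sum_mul]
        refine Finset.sum_congr rfl fun i _ => ?_
        have : k + i - k = i := by omega
        rw [this]; ring
    _ = ∑ j ∈ Finset.Ico 0 (N+1), ∑ k ∈ Finset.Ico 0 (j+1),
          h ^ (-α) * (glCoef α (j-k) * G j * F k) := by
        rw [Finset.range_eq_Ico, Finset.sum_Ico_Ico_comm]
    _ = ∑ j ∈ Finset.Icc 1 N, G j * dfracMinus α h F j := by
        simp only [← Finset.range_eq_Ico]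
        rw [Finset.sum_range_succ']
        have h0 : ∑ k ∈ Finset.range (0+1), h ^ (-α) * (glCoef α (0-k) * G 0 * F k) = 0 := by
          simp [hG0]
        rw [h0, add_zero]
        have hIcc : Finset.Icc 1 N = Finset.Ico 1 (N+1) := by
          rw [Finset.Ico_add_one_right_eq_Icc]
        rw [hIcc, Finset.sum_Ico_eq_sum_range]
        have e : N + 1 - 1 = N := by omega
        rw [e]
        refine Finset.sum_congr rfl fun j _ => ?_
        have e1 : 1 + j = j + 1 := by omega
        rw [e1, dfracMinus, key (j+1), Finset.mul_sum, Finset.mul_sum]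
        refine Finset.sum_congr rfl fun k _ => ?_
        ring
end

section
/- Under the same hypotheses as the discrete integration-by-parts lemma (sequences F, G of length N+1 with vanishing endpoints F_0 = F_N = G_0 = G_N = 0, and discrete fractional derivatives Δ_±^α with Grünwald–Letnikov coefficients), one has ∑_{k=0}^{N-1} G_{k+1} (Δ_-^α F_{k+1}) = ∑_{k=1}^{N-1} (Δ_+^α G_k) F_k. -/
open Finset

/-- Auxiliary combinatorial summation-by-parts identity. -/
lemma aux_sbp (N : ℕ) (hN : 1 ≤ N) (c F G : ℕ → ℝ)
    (hF0 : F 0 = 0) (hFN : F N = 0) :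
    ∑ k ∈ Finset.range N, ∑ n ∈ Finset.range (k + 1 + 1), c n * (G (k + 1) * F (k + 1 - n))
      = ∑ k ∈ Finset.Icc 1 (N - 1), ∑ n ∈ Finset.range (N - k + 1), c n * (G (k + n) * F k) := by
  have step1 : ∑ k ∈ Finset.range N, ∑ n ∈ Finset.range (k + 1 + 1), c n * (G (k + 1) * F (k + 1 - n))
      = ∑ j ∈ Finset.range (N + 1), ∑ i ∈ Finset.range (N + 1),
          (if i ≤ j then c (j - i) * (G j * F i) else 0) := by
    rw [Finset.sum_range_succ' (fun j => ∑ i ∈ Finset.range (N + 1),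
          (if i ≤ j then c (j - i) * (G j * F i) else 0)) N]
    have h0 : (∑ i ∈ Finset.range (N + 1),
        (if i ≤ 0 then c (0 - i) * (G 0 * F i) else 0)) = 0 := by
      apply Finset.sum_eq_zero
      intro i _
      by_cases hi : i ≤ 0
      · interval_cases i
        simp [hF0]
      · simp [hi]
    rw [h0, add_zero]
    apply Finset.sum_congr rfl
    intro k hk
    simp only [Finset.mem_range] at hk
    have hsub : Finset.range (k + 2) ⊆ Finset.range (N + 1) := by
      apply Finset.range_subset_range.2; omega
    rw [← Finset.sum_subset hsub (by
      intro i _ hi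
      simp only [Finset.mem_range, not_lt] at hi
      rw [if_neg (by omega)])]
    rw [← Finset.sum_range_reflect (fun n => c n * (G (k + 1) * F (k + 1 - n))) (k + 2)]
    apply Finset.sum_congr rfl
    intro i hi
    simp only [Finset.mem_range] at hi
    rw [if_pos (by omega)]
    have h1 : k + 2 - 1 - i = k + 1 - i := by omega
    have h2 : k + 1 - (k + 1 - i) = i := by omega
    rw [h1, h2]
  have step2 : ∑ j ∈ Finset.range (N + 1), ∑ i ∈ Finset.range (N + 1),
          (if i ≤ j then c (j - i) * (G j * F i) else 0)
      = ∑ k ∈ Finset.Icc 1 (N - 1), ∑ n ∈ Finset.range (N - k + 1), c n * (G (k + n) * F k) := by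
    rw [Finset.sum_comm]
    have hsub : Finset.Icc 1 (N - 1) ⊆ Finset.range (N + 1) := by
      intro i hi
      simp only [Finset.mem_Icc] at hi
      simp only [Finset.mem_range]
      omega
    rw [← Finset.sum_subset hsub (by
      intro i hi hni
      simp only [Finset.mem_range] at hi
      simp only [Finset.mem_Icc, not_and, not_le] at hni
      have hiN : i = 0 ∨ i = N := by omega
      have hFi : F i = 0 := by
        rcases hiN with rfl | rfl
        · exact hF0
        · exact hFN
      apply Finset.sum_eq_zero
      intro j _
      simp [hFi])]
    apply Finset.sum_congr rfl
    intro i hi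
    simp only [Finset.mem_Icc] at hi
    rw [← Finset.sum_filter]
    have hfil : (Finset.range (N + 1)).filter (fun j => i ≤ j) = Finset.Ico i (N + 1) := by
      ext x; simp only [Finset.mem_filter, Finset.mem_range, Finset.mem_Ico]; omega
    rw [hfil, Finset.sum_Ico_eq_sum_range]
    have hlen : N + 1 - i = N - i + 1 := by omega
    rw [hlen]
    apply Finset.sum_congr rfl
    intro n _
    congr 2
    omega
  rw [step1, step2]

/-- shifted discrete asymmetric integration by parts:
`∑_{k=0}^{N-1} G_{k+1} (Δ_-^α F_{k+1}) = ∑_{k=1}^{N-1} (Δ_+^α G_k) F_k`. -/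
theorem discrete_fractional_integration_by_parts_shifted
    (α h : ℝ) (hα0 : 0 ≤ α) (hα1 : α ≤ 1) (hh : 0 < h)
    (N : ℕ) (hN : 1 ≤ N) (F G : ℕ → ℝ)
    (hF0 : F 0 = 0) (hFN : F N = 0) (hG0 : G 0 = 0) (hGN : G N = 0) :
    ∑ k ∈ Finset.range N, G (k + 1) * dfracMinus α h F (k + 1)
      = ∑ k ∈ Finset.Icc 1 (N - 1), dfracPlus α h N G k * F k := by
  have key := aux_sbp N hN (glCoef α) F G hF0 hFN
  calc ∑ k ∈ Finset.range N, G (k + 1) * dfracMinus α h F (k + 1)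
      = h ^ (-α) * ∑ k ∈ Finset.range N, ∑ n ∈ Finset.range (k + 1 + 1),
          glCoef α n * (G (k + 1) * F (k + 1 - n)) := by
        rw [Finset.mul_sum]
        apply Finset.sum_congr rfl
        intro k _
        simp only [dfracMinus]
        rw [Finset.mul_sum, Finset.mul_sum, Finset.mul_sum]
        apply Finset.sum_congr rfl
        intro n _
        ring
    _ = h ^ (-α) * ∑ k ∈ Finset.Icc 1 (N - 1), ∑ n ∈ Finset.range (N - k + 1),
          glCoef α n * (G (k + n) * F k) := by rw [key]
    _ = ∑ k ∈ Finset.Icc 1 (N - 1), dfracPlus α h N G k * F k := by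
        rw [Finset.mul_sum]
        apply Finset.sum_congr rfl
        intro k _
        simp only [dfracPlus]
        rw [Finset.mul_sum, Finset.mul_sum, Finset.sum_mul]
        apply Finset.sum_congr rfl
        intro n _
        ring
end

section
/- Let α = 1/2 and let (y_k)_{0:N} be a real sequence. With Δ_+^{1/2} defined via the Grünwald–Letnikov coefficients, for every 1 ≤ k ≤ N-1 one has ∑_{n=0}^{N-k} α_n ∑_{p=0}^{N-k-n} α_p y_{k+n+p} = -(y_{k+1} - y_k), i.e., h Δ_+^{1/2} Δ_+^{1/2} y_k = -(y_{k+1} - y_k). -/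
open Finset

lemma glCoef_zero' (α : ℝ) : glCoef α 0 = 1 := by simp [glCoef]

lemma glCoef_zero : glCoef (1 / 2) 0 = 1 := glCoef_zero' _

lemma glCoef_succ (n : ℕ) :
    glCoef (1 / 2) (n + 1) = glCoef (1 / 2) n * ((2 * n - 1) / (2 * (n + 1))) := by
  have hfac : ((n + 1).factorial : ℝ) = (n + 1) * n.factorial := by
    rw [Nat.factorial_succ]; push_cast; ring
  have hfacne : (n.factorial : ℝ) ≠ 0 := by positivity
  have hn1 : ((n : ℝ) + 1) ≠ 0 := by positivity
  rw [glCoef, glCoef, Finset.prod_range_succ, hfac]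
  field_simp
  ring

lemma glCoef_catalan (n : ℕ) :
    glCoef (1 / 2) (n + 1) = -(catalan n : ℝ) / 2 ^ (2 * n + 1) := by
  induction n with
  | zero => rw [glCoef_succ, glCoef_zero]; norm_num
  | succ n ih =>
    have hrec : ((n : ℝ) + 2) * (catalan (n + 1) : ℝ)
        = 2 * (2 * n + 1) * (catalan n : ℝ) := by
      have h1 : (n + 1 + 1) * catalan (n + 1) = (n + 1).centralBinom :=
        succ_mul_catalan_eq_centralBinom (n + 1)
      have h2 : (n + 1) * catalan n = n.centralBinom :=
        succ_mul_catalan_eq_centralBinom n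
      have h3 : (n + 1) * (n + 1).centralBinom = 2 * (2 * n + 1) * n.centralBinom :=
        Nat.succ_mul_centralBinom_succ n
      have key : (n + 1) * ((n + 2) * catalan (n + 1))
          = (n + 1) * (2 * (2 * n + 1) * catalan n) := by
        calc (n + 1) * ((n + 2) * catalan (n + 1))
            = (n + 1) * ((n + 1).centralBinom) := by rw [← h1]
          _ = 2 * (2 * n + 1) * ((n + 1) * catalan n) := by rw [h3, ← h2]
          _ = (n + 1) * (2 * (2 * n + 1) * catalan n) := by ring
      have := Nat.eq_of_mul_eq_mul_left (Nat.succ_pos n) key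
      exact_mod_cast congrArg (Nat.cast : ℕ → ℝ) this
    rw [glCoef_succ, ih]
    have hne : ((n : ℝ) + 2) ≠ 0 := by positivity
    have hcat : (catalan (n + 1) : ℝ) = 2 * (2 * n + 1) * (catalan n : ℝ) / (n + 2) := by
      field_simp; linarith [hrec]
    rw [hcat]
    have h2 : (2 : ℝ) ^ (2 * (n + 1) + 1) = 2 ^ (2 * n + 1) * 4 := by ring
    push_cast
    rw [h2]
    have hpne : ((2:ℝ) ^ (2 * n + 1)) ≠ 0 := by positivity
    field_simp
    ring

lemma glCoef_conv (m : ℕ) :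
    ∑ n ∈ Finset.range (m + 1), glCoef (1 / 2) n * glCoef (1 / 2) (m - n)
      = if m = 0 then 1 else if m = 1 then -1 else 0 := by
  match m with
  | 0 => simp [glCoef_zero']
  | 1 =>
    have h1 : glCoef (1 / 2) 1 = -(1/2 : ℝ) := by
      exact (glCoef_catalan 0).trans (by norm_num [catalan_zero])
    rw [Finset.sum_range_succ, Finset.sum_range_one]
    norm_num [glCoef_zero, h1]
  | (m + 2) =>
    simp only [if_neg (by omega : ¬ m + 2 = 0), if_neg (by omega : ¬ m + 2 = 1)]
    have hmid : ∑ n ∈ Finset.Ico 1 (m + 2), glCoef (1 / 2) n * glCoef (1 / 2) (m + 2 - n)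
        = (catalan (m + 1) : ℝ) / 2 ^ (2 * m + 2) := by
      rw [Finset.sum_Ico_eq_sum_range]
      have hterm : ∀ i ∈ Finset.range (m + 2 - 1),
          glCoef (1 / 2) (1 + i) * glCoef (1 / 2) (m + 2 - (1 + i))
            = (catalan i : ℝ) * (catalan (m - i) : ℝ) / 2 ^ (2 * m + 2) := by
        intro i hi
        rw [Finset.mem_range] at hi
        have hi' : i ≤ m := by omega
        rw [show 1 + i = i + 1 by ring, show m + 2 - (i + 1) = (m - i) + 1 by omega,
          glCoef_catalan, glCoef_catalan]
        rw [div_mul_div_comm, ← pow_add]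
        rw [show 2 * i + 1 + (2 * (m - i) + 1) = 2 * m + 2 by omega]
        ring
      rw [Finset.sum_congr rfl hterm, ← Finset.sum_div]
      congr 1
      have := catalan_succ m
      rw [this, Fin.sum_univ_eq_sum_range (fun i => catalan i * catalan (m - i))]
      rw [show m + 2 - 1 = m + 1 by omega]
      push_cast
      rfl
    have hsplit : ∑ n ∈ Finset.range (m + 3), glCoef (1 / 2) n * glCoef (1 / 2) (m + 2 - n)
        = glCoef (1 / 2) 0 * glCoef (1 / 2) (m + 2)
          + (∑ n ∈ Finset.Ico 1 (m + 2), glCoef (1 / 2) n * glCoef (1 / 2) (m + 2 - n))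
          + glCoef (1 / 2) (m + 2) * glCoef (1 / 2) 0 := by
      rw [Finset.sum_range_succ, Finset.range_eq_Ico,
        Finset.sum_eq_sum_Ico_succ_bot (by omega : 0 < m + 2)]
      simp
    rw [hsplit, hmid, glCoef_zero, show m + 2 = (m + 1) + 1 from rfl, glCoef_catalan]
    have hpne : ((2:ℝ) ^ (2 * (m + 1) + 1)) ≠ 0 := by positivity
    rw [show 2 * (m + 1) + 1 = (2 * m + 2) + 1 by omega, pow_succ]
    have h2 : ((2:ℝ) ^ (2 * m + 2)) ≠ 0 := by positivity
    field_simp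
    ring

/-- reindexing the triangle sum -/
lemma tri_sum (f : ℕ → ℕ → ℝ) (M : ℕ) :
    ∑ n ∈ Finset.range (M + 1), ∑ p ∈ Finset.range (M - n + 1), f n p
      = ∑ m ∈ Finset.range (M + 1), ∑ n ∈ Finset.range (m + 1), f n (m - n) := by
  rw [Finset.sum_sigma', Finset.sum_sigma']
  refine Finset.sum_nbij' (fun x => ⟨x.1 + x.2, x.1⟩) (fun x => ⟨x.2, x.1 - x.2⟩)
    ?_ ?_ ?_ ?_ ?_
  · rintro ⟨n, p⟩ h
    simp only [Finset.mem_sigma, Finset.mem_range] at h ⊢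
    omega
  · rintro ⟨m, n⟩ h
    simp only [Finset.mem_sigma, Finset.mem_range] at h ⊢
    omega
  · rintro ⟨n, p⟩ h
    simp
  · rintro ⟨m, n⟩ h
    simp only [Finset.mem_sigma, Finset.mem_range] at h
    simp only [Sigma.mk.inj_iff]
    exact ⟨by omega, HEq.rfl⟩
  · rintro ⟨n, p⟩ h
    simp only [Finset.mem_sigma, Finset.mem_range] at h
    simp only [Nat.add_sub_cancel_left]

lemma final_sum (y' : ℕ → ℝ) (M' : ℕ) :
    ∑ m ∈ Finset.range (M' + 2),
      (if m = 0 then (1:ℝ) else if m = 1 then -1 else 0) * y' m = y' 0 - y' 1 := by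
  induction M' with
  | zero =>
    rw [Finset.sum_range_succ, Finset.sum_range_one]
    norm_num
    ring
  | succ n ih =>
    rw [Finset.sum_range_succ, ih, if_neg (by omega), if_neg (by omega)]
    ring

/-- for `α = 1/2` and `1 ≤ k ≤ N-1`,
`∑_{n=0}^{N-k} α_n ∑_{p=0}^{N-k-n} α_p y_{k+n+p} = -(y_{k+1} - y_k)`,
i.e. `h Δ_+^{1/2} Δ_+^{1/2} y_k = -(y_{k+1} - y_k)`. -/
theorem glCoef_half_advanced_double_sum (N : ℕ) (y : ℕ → ℝ)
    (k : ℕ) (hk1 : 1 ≤ k) (hk2 : k ≤ N - 1) :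
    (∑ n ∈ Finset.range (N - k + 1), glCoef (1 / 2) n *
        ∑ p ∈ Finset.range (N - k - n + 1), glCoef (1 / 2) p * y (k + n + p)
      = -(y (k + 1) - y k)) ∧
    ∀ h : ℝ, 0 < h → h * ddfracPlus (1 / 2) h N y k = -(y (k + 1) - y k) := by
  have hM : 1 ≤ N - k := by omega
  set M := N - k with hMdef
  have key : ∑ n ∈ Finset.range (M + 1), glCoef (1 / 2) n *
      ∑ p ∈ Finset.range (M - n + 1), glCoef (1 / 2) p * y (k + n + p)
      = -(y (k + 1) - y k) := by
    have h1 : ∀ n, glCoef (1 / 2) n *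
        ∑ p ∈ Finset.range (M - n + 1), glCoef (1 / 2) p * y (k + n + p)
        = ∑ p ∈ Finset.range (M - n + 1),
            glCoef (1 / 2) n * glCoef (1 / 2) p * y (k + n + p) := by
      intro n; rw [Finset.mul_sum]; exact Finset.sum_congr rfl fun p _ => by ring
    simp only [h1]
    rw [tri_sum (fun n p => glCoef (1/2) n * glCoef (1/2) p * y (k + n + p)) M]
    have h2 : ∀ m ∈ Finset.range (M + 1),
        (∑ n ∈ Finset.range (m + 1),
          glCoef (1/2) n * glCoef (1/2) (m - n) * y (k + n + (m - n)))
        = (if m = 0 then 1 else if m = 1 then -1 else 0) * y (k + m) := by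
      intro m _
      rw [← glCoef_conv m, Finset.sum_mul]
      refine Finset.sum_congr rfl fun n hn => ?_
      rw [Finset.mem_range] at hn
      rw [show k + n + (m - n) = k + m by omega]
    rw [Finset.sum_congr rfl h2]
    obtain ⟨M', hM'⟩ : ∃ M', M + 1 = M' + 2 := ⟨M - 1, by omega⟩
    rw [hM']
    have := final_sum (fun m => y (k + m)) M'
    rw [this]
    ring_nf

  refine ⟨key, fun h hh => ?_⟩
  rw [ddfracPlus]
  have : h ^ (-(2 * (1/2 : ℝ))) = h⁻¹ := by
    rw [show -(2 * (1/2 : ℝ)) = -1 by norm_num, Real.rpow_neg_one]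
  rw [this, ← hMdef]
  rw [← mul_assoc, mul_inv_cancel₀ (ne_of_gt hh), one_mul]
  exact key
end

section
/- (Sufficiency under restricted variations, discrete case.) Let N ≥ 2 and let L_d^k : ℝ^{d(k+2)} × ℝ^{d(N+1-k)} → ℝ, k = 0,…,N-1, be differentiable. A discrete curve pair (x_k)_{0:N}, (y_k)_{0:N} satisfies, for each k = 1,…,N-1, ∑_{i=k-1}^{N-1} D_{x_k} L_d^i(x_{(0,i+1)}, y_{(i,N)}) + ∑_{i=0}^{k} D_{y_k} L_d^i(x_{(0,i+1)}, y_{(i,N)}) = 0 if and only if the first variation of the discrete action S_d = ∑_{k=0}^{N-1} L_d^k(x_{(0,k+1)}, y_{(k,N)}) vanishes for all restricted variations (δx_k = δy_k for all k, with δx_0 = δx_N = 0). -/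
open Finset

/-- sufficiency--necessity under restricted variations, discrete
case: a discrete curve pair `(X, Y)` satisfies, for each `k = 1,…,N-1`,
`∑_{i=k-1}^{N-1} D_{x_k} L_d^i + ∑_{i=0}^{k} D_{y_k} L_d^i = 0`
if and only if the first variation of the discrete action
`S_d = ∑_{k=0}^{N-1} L_d^k` vanishes for all restricted variations
(`δx = δy = η`, with `η_0 = η_N = 0`).  Here `L_d^i` depends only on
`x_0,…,x_{i+1}` and `y_i,…,y_N`, and is differentiable. -/
theorem discrete_restricted_first_variation_iff (d N : ℕ) (hN : 2 ≤ N)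
    (L : ℕ → (Fin (N + 1) → Fin d → ℝ) → (Fin (N + 1) → Fin d → ℝ) → ℝ)
    (hdiff : ∀ i < N, Differentiable ℝ
      (fun q : (Fin (N + 1) → Fin d → ℝ) × (Fin (N + 1) → Fin d → ℝ) => L i q.1 q.2))
    (hdepx : ∀ i < N, ∀ X X' Y : Fin (N + 1) → Fin d → ℝ,
      (∀ j : Fin (N + 1), (j : ℕ) ≤ i + 1 → X j = X' j) → L i X Y = L i X' Y)
    (hdepy : ∀ i < N, ∀ X Y Y' : Fin (N + 1) → Fin d → ℝ,
      (∀ j : Fin (N + 1), i ≤ (j : ℕ) → Y j = Y' j) → L i X Y = L i X Y')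
    (X Y : Fin (N + 1) → Fin d → ℝ) :
    (∀ k : Fin (N + 1), 1 ≤ (k : ℕ) → (k : ℕ) ≤ N - 1 → ∀ j : Fin d,
      (∑ i ∈ Finset.Icc ((k : ℕ) - 1) (N - 1),
        fderiv ℝ (fun q : (Fin (N + 1) → Fin d → ℝ) × (Fin (N + 1) → Fin d → ℝ) =>
          L i q.1 q.2) (X, Y) (Pi.single k (Pi.single j 1), 0))
      + (∑ i ∈ Finset.Icc 0 (k : ℕ),
        fderiv ℝ (fun q : (Fin (N + 1) → Fin d → ℝ) × (Fin (N + 1) → Fin d → ℝ) =>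
          L i q.1 q.2) (X, Y) (0, Pi.single k (Pi.single j 1))) = 0)
    ↔ (∀ η : Fin (N + 1) → Fin d → ℝ, η 0 = 0 → η (Fin.last N) = 0 →
        deriv (fun ε : ℝ => ∑ i ∈ Finset.range N, L i (X + ε • η) (Y + ε • η)) 0 = 0) := by
  -- derivative of the action along a variation
  have key : ∀ η : Fin (N + 1) → Fin d → ℝ,
      HasDerivAt (fun ε : ℝ => ∑ i ∈ Finset.range N, L i (X + ε • η) (Y + ε • η))
        (∑ i ∈ Finset.range N,
          fderiv ℝ (fun q : (Fin (N + 1) → Fin d → ℝ) × (Fin (N + 1) → Fin d → ℝ) =>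
            L i q.1 q.2) (X, Y) (η, η)) 0 := by
    intro η
    apply HasDerivAt.fun_sum
    intro i hi
    have h1 : HasDerivAt (fun ε : ℝ => X + ε • η) η 0 := by
      simpa using ((hasDerivAt_id (0 : ℝ)).smul_const η).const_add X
    have h2 : HasDerivAt (fun ε : ℝ => Y + ε • η) η 0 := by
      simpa using ((hasDerivAt_id (0 : ℝ)).smul_const η).const_add Y
    have hline := h1.prodMk h2
    have hd : HasFDerivAt
        (fun q : (Fin (N + 1) → Fin d → ℝ) × (Fin (N + 1) → Fin d → ℝ) => L i q.1 q.2)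
        (fderiv ℝ (fun q : (Fin (N + 1) → Fin d → ℝ) × (Fin (N + 1) → Fin d → ℝ) =>
          L i q.1 q.2) (X, Y)) ((fun ε : ℝ => (X + ε • η, Y + ε • η)) 0) := by
      simpa using ((hdiff i (Finset.mem_range.mp hi)) (X, Y)).hasFDerivAt
    simpa [Function.comp_def] using hd.comp_hasDerivAt 0 hline
  -- vanishing of x-partials for far coordinates
  have vanishx : ∀ i < N, ∀ (k : Fin (N + 1)) (v : Fin d → ℝ), i + 1 < (k : ℕ) →
      fderiv ℝ (fun q : (Fin (N + 1) → Fin d → ℝ) × (Fin (N + 1) → Fin d → ℝ) =>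
        L i q.1 q.2) (X, Y) (Pi.single k v, 0) = 0 := by
    intro i hi k v hk
    have h1 : HasDerivAt
        (fun t : ℝ => X + t • (Pi.single k v : Fin (N + 1) → Fin d → ℝ))
        (Pi.single k v : Fin (N + 1) → Fin d → ℝ) 0 := by
      simpa using ((hasDerivAt_id (0 : ℝ)).smul_const
        (Pi.single k v : Fin (N + 1) → Fin d → ℝ)).const_add X
    have hline := h1.prodMk (hasDerivAt_const (0 : ℝ) Y)
    have hd : HasFDerivAt
        (fun q : (Fin (N + 1) → Fin d → ℝ) × (Fin (N + 1) → Fin d → ℝ) => L i q.1 q.2)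
        (fderiv ℝ (fun q : (Fin (N + 1) → Fin d → ℝ) × (Fin (N + 1) → Fin d → ℝ) =>
          L i q.1 q.2) (X, Y))
        ((fun t : ℝ => (X + t • (Pi.single k v : Fin (N + 1) → Fin d → ℝ), Y)) 0) := by
      simpa using ((hdiff i hi) (X, Y)).hasFDerivAt
    have hg : HasDerivAt
        (fun t : ℝ => L i (X + t • (Pi.single k v : Fin (N + 1) → Fin d → ℝ)) Y)
        (fderiv ℝ (fun q : (Fin (N + 1) → Fin d → ℝ) × (Fin (N + 1) → Fin d → ℝ) =>
          L i q.1 q.2) (X, Y) (Pi.single k v, 0)) 0 := by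
      simpa [Function.comp_def] using hd.comp_hasDerivAt 0 hline
    have hconst : (fun t : ℝ =>
        L i (X + t • (Pi.single k v : Fin (N + 1) → Fin d → ℝ)) Y) = fun _ => L i X Y := by
      funext t
      refine hdepx i hi (X + t • (Pi.single k v : Fin (N + 1) → Fin d → ℝ)) X Y ?_
      intro j hj
      have hne : j ≠ k := by
        intro h; subst h; omega
      simp [Pi.single_eq_of_ne hne]
    have hder := hg.deriv
    rw [hconst, deriv_const] at hder
    exact hder.symm
  -- vanishing of y-partials for far coordinates
  have vanishy : ∀ i < N, ∀ (k : Fin (N + 1)) (v : Fin d → ℝ), (k : ℕ) < i →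
      fderiv ℝ (fun q : (Fin (N + 1) → Fin d → ℝ) × (Fin (N + 1) → Fin d → ℝ) =>
        L i q.1 q.2) (X, Y) (0, Pi.single k v) = 0 := by
    intro i hi k v hk
    have h1 : HasDerivAt
        (fun t : ℝ => Y + t • (Pi.single k v : Fin (N + 1) → Fin d → ℝ))
        (Pi.single k v : Fin (N + 1) → Fin d → ℝ) 0 := by
      simpa using ((hasDerivAt_id (0 : ℝ)).smul_const
        (Pi.single k v : Fin (N + 1) → Fin d → ℝ)).const_add Y
    have hline := (hasDerivAt_const (0 : ℝ) X).prodMk h1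
    have hd : HasFDerivAt
        (fun q : (Fin (N + 1) → Fin d → ℝ) × (Fin (N + 1) → Fin d → ℝ) => L i q.1 q.2)
        (fderiv ℝ (fun q : (Fin (N + 1) → Fin d → ℝ) × (Fin (N + 1) → Fin d → ℝ) =>
          L i q.1 q.2) (X, Y))
        ((fun t : ℝ => (X, Y + t • (Pi.single k v : Fin (N + 1) → Fin d → ℝ))) 0) := by
      simpa using ((hdiff i hi) (X, Y)).hasFDerivAt
    have hg : HasDerivAt
        (fun t : ℝ => L i X (Y + t • (Pi.single k v : Fin (N + 1) → Fin d → ℝ)))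
        (fderiv ℝ (fun q : (Fin (N + 1) → Fin d → ℝ) × (Fin (N + 1) → Fin d → ℝ) =>
          L i q.1 q.2) (X, Y) (0, Pi.single k v)) 0 := by
      simpa [Function.comp_def] using hd.comp_hasDerivAt 0 hline
    have hconst : (fun t : ℝ =>
        L i X (Y + t • (Pi.single k v : Fin (N + 1) → Fin d → ℝ))) = fun _ => L i X Y := by
      funext t
      refine hdepy i hi X (Y + t • (Pi.single k v : Fin (N + 1) → Fin d → ℝ)) Y ?_
      intro j hj
      have hne : j ≠ k := by
        intro h; subst h; omega
      simp [Pi.single_eq_of_ne hne]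
    have hder := hg.deriv
    rw [hconst, deriv_const] at hder
    exact hder.symm
  -- the Icc sums equal range sums, for admissible k
  have hxsum : ∀ (k : Fin (N + 1)), 1 ≤ (k : ℕ) → (k : ℕ) ≤ N - 1 → ∀ v : Fin d → ℝ,
      ∑ i ∈ Finset.Icc ((k : ℕ) - 1) (N - 1),
        fderiv ℝ (fun q : (Fin (N + 1) → Fin d → ℝ) × (Fin (N + 1) → Fin d → ℝ) =>
          L i q.1 q.2) (X, Y) (Pi.single k v, 0)
      = ∑ i ∈ Finset.range N,
        fderiv ℝ (fun q : (Fin (N + 1) → Fin d → ℝ) × (Fin (N + 1) → Fin d → ℝ) =>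
          L i q.1 q.2) (X, Y) (Pi.single k v, 0) := by
    intro k hk1 hkN v
    refine Finset.sum_subset ?_ ?_
    · intro i hi
      rw [Finset.mem_Icc] at hi
      rw [Finset.mem_range]
      omega
    · intro i hi hnot
      rw [Finset.mem_range] at hi
      rw [Finset.mem_Icc] at hnot
      exact vanishx i hi k v (by omega)
  have hysum : ∀ (k : Fin (N + 1)), 1 ≤ (k : ℕ) → (k : ℕ) ≤ N - 1 → ∀ v : Fin d → ℝ,
      ∑ i ∈ Finset.Icc 0 (k : ℕ),
        fderiv ℝ (fun q : (Fin (N + 1) → Fin d → ℝ) × (Fin (N + 1) → Fin d → ℝ) =>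
          L i q.1 q.2) (X, Y) (0, Pi.single k v)
      = ∑ i ∈ Finset.range N,
        fderiv ℝ (fun q : (Fin (N + 1) → Fin d → ℝ) × (Fin (N + 1) → Fin d → ℝ) =>
          L i q.1 q.2) (X, Y) (0, Pi.single k v) := by
    intro k hk1 hkN v
    refine Finset.sum_subset ?_ ?_
    · intro i hi
      rw [Finset.mem_Icc] at hi
      rw [Finset.mem_range]
      omega
    · intro i hi hnot
      rw [Finset.mem_range] at hi
      rw [Finset.mem_Icc] at hnot
      exact vanishy i hi k v (by omega)
  constructor
  · -- EL ⇒ vanishing first variation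
    intro hEL η hη0 hηN
    rw [(key η).deriv]
    have hfun : η = ∑ k : Fin (N + 1), ∑ j : Fin d, η k j •
        (Pi.single k (Pi.single j 1) : Fin (N + 1) → Fin d → ℝ) := by
      funext l m
      simp [Finset.sum_apply, apply_ite (fun f : Fin d → ℝ => f m), Pi.single_apply,
        mul_ite, Finset.sum_ite_eq']
    have hdecomp : ((η, η) : (Fin (N + 1) → Fin d → ℝ) × (Fin (N + 1) → Fin d → ℝ))
        = ∑ k : Fin (N + 1), ∑ j : Fin d, η k j •
            ((Pi.single k (Pi.single j 1), Pi.single k (Pi.single j 1)) :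
              (Fin (N + 1) → Fin d → ℝ) × (Fin (N + 1) → Fin d → ℝ)) := by
      rw [Prod.ext_iff]
      constructor
      · simp only [Prod.fst_sum, Prod.smul_fst]
        exact hfun
      · simp only [Prod.snd_sum, Prod.smul_snd]
        exact hfun
    have hsplit : ∀ i ∈ Finset.range N,
        fderiv ℝ (fun q : (Fin (N + 1) → Fin d → ℝ) × (Fin (N + 1) → Fin d → ℝ) =>
          L i q.1 q.2) (X, Y) (η, η)
        = ∑ k : Fin (N + 1), ∑ j : Fin d, η k j •
            (fderiv ℝ (fun q : (Fin (N + 1) → Fin d → ℝ) × (Fin (N + 1) → Fin d → ℝ) =>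
              L i q.1 q.2) (X, Y) (Pi.single k (Pi.single j 1), 0)
            + fderiv ℝ (fun q : (Fin (N + 1) → Fin d → ℝ) × (Fin (N + 1) → Fin d → ℝ) =>
              L i q.1 q.2) (X, Y) (0, Pi.single k (Pi.single j 1))) := by
      intro i hi
      conv_lhs => rw [hdecomp]
      rw [map_sum]
      refine Finset.sum_congr rfl fun k _ => ?_
      rw [map_sum]
      refine Finset.sum_congr rfl fun j _ => ?_
      rw [map_smul]
      congr 1
      have hpair : ((Pi.single k (Pi.single j 1), Pi.single k (Pi.single j 1)) :
          (Fin (N + 1) → Fin d → ℝ) × (Fin (N + 1) → Fin d → ℝ))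
          = (Pi.single k (Pi.single j 1), 0) + (0, Pi.single k (Pi.single j 1)) := by
        simp
      rw [hpair, map_add]
    rw [Finset.sum_congr rfl hsplit, Finset.sum_comm]
    refine Finset.sum_eq_zero fun k _ => ?_
    rw [Finset.sum_comm]
    refine Finset.sum_eq_zero fun j _ => ?_
    by_cases hk0 : (k : ℕ) = 0
    · have hk' : k = 0 := Fin.ext (by simpa using hk0)
      subst hk'
      simp [hη0]
    by_cases hkN' : (k : ℕ) = N
    · have hk' : k = Fin.last N := Fin.ext (by simpa [Fin.val_last] using hkN')
      subst hk'
      simp [hηN]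
    have hk1 : 1 ≤ (k : ℕ) := by omega
    have hkle : (k : ℕ) ≤ N - 1 := by
      have := k.isLt; omega
    rw [← Finset.smul_sum, Finset.sum_add_distrib,
      ← hxsum k hk1 hkle (Pi.single j 1), ← hysum k hk1 hkle (Pi.single j 1),
      hEL k hk1 hkle j, smul_zero]
  · -- vanishing first variation ⇒ EL
    intro hvar k hk1 hkN j
    have hη0 : (Pi.single k (Pi.single j 1) : Fin (N + 1) → Fin d → ℝ) 0 = 0 := by
      apply Pi.single_eq_of_ne
      intro h
      rw [Fin.ext_iff] at h
      simp at h
      omega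
    have hηN' : (Pi.single k (Pi.single j 1) : Fin (N + 1) → Fin d → ℝ) (Fin.last N) = 0 := by
      apply Pi.single_eq_of_ne
      intro h
      rw [Fin.ext_iff] at h
      simp [Fin.val_last] at h
      omega
    have h0 := hvar (Pi.single k (Pi.single j 1)) hη0 hηN'
    rw [(key (Pi.single k (Pi.single j 1))).deriv] at h0
    have hsplit : ∀ i ∈ Finset.range N,
        fderiv ℝ (fun q : (Fin (N + 1) → Fin d → ℝ) × (Fin (N + 1) → Fin d → ℝ) =>
          L i q.1 q.2) (X, Y)
          ((Pi.single k (Pi.single j 1) : Fin (N + 1) → Fin d → ℝ),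
            (Pi.single k (Pi.single j 1) : Fin (N + 1) → Fin d → ℝ))
        = fderiv ℝ (fun q : (Fin (N + 1) → Fin d → ℝ) × (Fin (N + 1) → Fin d → ℝ) =>
            L i q.1 q.2) (X, Y) (Pi.single k (Pi.single j 1), 0)
          + fderiv ℝ (fun q : (Fin (N + 1) → Fin d → ℝ) × (Fin (N + 1) → Fin d → ℝ) =>
            L i q.1 q.2) (X, Y) (0, Pi.single k (Pi.single j 1)) := by
      intro i hi
      rw [← map_add]
      congr 1
      simp
    rw [Finset.sum_congr rfl hsplit, Finset.sum_add_distrib] at h0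
    rw [hxsum k hk1 hkN (Pi.single j 1), hysum k hk1 hkN (Pi.single j 1)]
    exact h0
end
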